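/- Define artin(λ) as the least cardinal κ such that no algebra of cardinality κ with signature of size at most λ is Artinian (if such κ exists). Then for any infinite cardinals λ₁ < λ₂ < artin(λ₁), one has artin(λ₂) = artin(λ₁). -/

import Mathlib

universe u

structure Alg (ι : Type u) (M : Type u) where
  arity : ι → ℕ
  op : (i : ι) → (Fin (arity i) → M) → M

namespace Alg

variable {ι M : Type u}

/-- A set is closed under all operations of the algebra. -/
def Closed (A : Alg ι M) (S : Set M) : Prop :=
  ∀ (i : ι) (x : Fin (A.arity i) → M), (∀ k, x k ∈ S) → A.op i x ∈ S

/-- Membership in the subalgebra generated by `X`. -/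
inductive cl (A : Alg ι M) (X : Set M) : M → Prop
  | base {m : M} (h : m ∈ X) : cl A X m
  | op (i : ι) (x : Fin (A.arity i) → M) (h : ∀ k, cl A X (x k)) : cl A X (A.op i x)

/-- A subset is free if no element lies in the subalgebra generated by the others. -/
def Free (A : Alg ι M) (X : Set M) : Prop :=
  ∀ x ∈ X, ¬ A.cl (X \ {x}) x

/-- An algebra is Artinian if there is no infinite strictly descending chain of
(nonempty closed) subalgebras. -/
def Artinian (A : Alg ι M) : Prop :=
  ¬ ∃ S : ℕ → Set M, (∀ n, (S n).Nonempty ∧ A.Closed (S n)) ∧ ∀ n, S (n + 1) ⊂ S n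

end Alg

open Cardinal

/-- `ArtinAt lam κ` : every algebra of cardinality κ with at most lam operations is
non-Artinian. -/
def ArtinAt (lam κ : Cardinal.{u}) : Prop :=
  ∀ (ι M : Type u) (A : Alg ι M), #ι ≤ lam → #M = κ → ¬ A.Artinian

/-- `FrAt lam κ` : every algebra of cardinality κ with at most lam operations has an
infinite free subset. -/
def FrAt (lam κ : Cardinal.{u}) : Prop :=
  ∀ (ι M : Type u) (A : Alg ι M), #ι ≤ lam → #M = κ →
    ∃ X : Set M, X.Infinite ∧ A.Free X

namespace Stmt10Aux

open Set

variable {ι M : Type u} {A : Alg ι M}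

theorem cl_mono {X Y : Set M} (h : X ⊆ Y) : ∀ {m}, A.cl X m → A.cl Y m := by
  intro m hm
  induction hm with
  | base hx => exact Alg.cl.base (h hx)
  | op i x hx ih => exact Alg.cl.op i x ih

theorem cl_le_closed {X S : Set M} (hS : A.Closed S) (hXS : X ⊆ S) :
    ∀ {m}, A.cl X m → m ∈ S := by
  intro m hm
  induction hm with
  | base hx => exact hXS hx
  | op i x hx ih => exact hS i x ih

theorem cl_trans {X Y : Set M} (h : ∀ y ∈ Y, A.cl X y) :
    ∀ {m}, A.cl Y m → A.cl X m := by
  intro m hm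
  induction hm with
  | base hy => exact h _ hy
  | op i x hx ih => exact Alg.cl.op i x ih

/-- From a "bad sequence" (each term not generated by its strict tail) we get a strictly
descending chain, so the algebra is not Artinian. -/
theorem not_artinian_of_badseq (x : ℕ → M)
    (hx : ∀ n, ¬ A.cl {y | ∃ m, n < m ∧ x m = y} (x n)) : ¬ A.Artinian := by
  intro hart
  apply hart
  refine ⟨fun n => {m | A.cl {y | ∃ k, n ≤ k ∧ x k = y} m},
    fun n => ⟨⟨x n, Alg.cl.base ⟨n, le_rfl, rfl⟩⟩, fun i v hv => Alg.cl.op i v hv⟩,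
    fun n => ?_⟩
  have hset : {y | ∃ k, n + 1 ≤ k ∧ x k = y} = {y | ∃ m, n < m ∧ x m = y} := by
    ext y; constructor
    · rintro ⟨k, hk, rfl⟩; exact ⟨k, hk, rfl⟩
    · rintro ⟨k, hk, rfl⟩; exact ⟨k, hk, rfl⟩
  show {m | A.cl {y | ∃ k, n + 1 ≤ k ∧ x k = y} m} ⊂ {m | A.cl {y | ∃ k, n ≤ k ∧ x k = y} m}
  rw [Set.ssubset_iff_subset_ne]
  constructor
  · intro m hm
    refine cl_mono ?_ hm
    rintro y ⟨k, hk, rfl⟩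
    exact ⟨k, by omega, rfl⟩
  · intro heq
    have h1 : A.cl {y | ∃ k, n ≤ k ∧ x k = y} (x n) := Alg.cl.base ⟨n, le_rfl, rfl⟩
    have h2 : x n ∈ {m | A.cl {y | ∃ k, n + 1 ≤ k ∧ x k = y} m} := by
      rw [heq]; exact h1
    rw [hset] at h2
    exact hx n h2

theorem infinite_exists_gt {D : Set ℕ} (hD : D.Infinite) (a : ℕ) : ∃ b, b ∈ D ∧ a < b := by
  by_contra h
  push_neg at h
  exact hD (Set.Finite.subset (Set.finite_Iic a) (fun b hb => h b hb))

theorem exists_strictMono_mem {D : Set ℕ} (hD : D.Infinite) :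
    ∃ f : ℕ → ℕ, StrictMono f ∧ ∀ n, f n ∈ D := by
  let g : ℕ → ℕ := fun a => (infinite_exists_gt hD a).choose
  have hg1 : ∀ a, g a ∈ D := fun a => (infinite_exists_gt hD a).choose_spec.1
  have hg2 : ∀ a, a < g a := fun a => (infinite_exists_gt hD a).choose_spec.2
  let f : ℕ → ℕ := fun n => Nat.rec (g 0) (fun _ p => g p) n
  have hfs : ∀ n, f (n + 1) = g (f n) := fun n => rfl
  refine ⟨f, strictMono_nat_of_lt_succ fun n => ?_, fun n => ?_⟩
  · rw [hfs]; exact hg2 (f n)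
  · cases n with
    | zero => exact hg1 0
    | succ k => rw [hfs]; exact hg1 (f k)

/-- In an Artinian algebra, every sequence is eventually generated by its strict tails. -/
theorem eventually_tail_dep (hart : A.Artinian) (x : ℕ → M) :
    ∃ n₀, ∀ n, n₀ ≤ n → A.cl {y | ∃ m, n < m ∧ x m = y} (x n) := by
  by_contra h
  push_neg at h
  have hD : {n | ¬ A.cl {y | ∃ m, n < m ∧ x m = y} (x n)}.Infinite := by
    intro hfin
    obtain ⟨b, hb⟩ := hfin.bddAbove
    obtain ⟨n, hn1, hn2⟩ := h (b + 1)
    have := hb hn2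
    omega
  obtain ⟨f, hf, hfD⟩ := exists_strictMono_mem hD
  refine not_artinian_of_badseq (fun k => x (f k)) (fun k hk => ?_) hart
  refine hfD k (cl_mono ?_ hk)
  rintro y ⟨j, hj, rfl⟩
  exact ⟨f j, hf hj, rfl⟩

theorem cl_finset_support {X : Set M} : ∀ {m}, A.cl X m →
    ∃ s : Finset M, ↑s ⊆ X ∧ A.cl (↑s : Set M) m := by
  intro m hm
  induction hm with
  | base hx =>
    exact ⟨{_}, by simpa using hx, Alg.cl.base (by simp)⟩
  | op i v hv ih =>
    classical
    choose s hs1 hs2 using ih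
    refine ⟨Finset.univ.biUnion s, ?_, ?_⟩
    · intro y hy
      simp only [Finset.coe_biUnion, Finset.coe_univ, Set.mem_iUnion] at hy
      obtain ⟨k, -, hk⟩ := hy
      exact hs1 k hk
    · refine Alg.cl.op i v fun k => cl_mono ?_ (hs2 k)
      intro y hy
      simp only [Finset.coe_biUnion, Finset.coe_univ, Set.mem_iUnion]
      exact ⟨k, Set.mem_univ k, hy⟩

theorem cl_tuple_support {X : Set M} {m : M} (hm : A.cl X m) (a : M) (ha : a ∈ X) :
    ∃ (r : ℕ) (z : Fin (r + 1) → M), (∀ j, z j ∈ X) ∧ A.cl (Set.range z) m := by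
  obtain ⟨s, hs1, hs2⟩ := cl_finset_support hm
  refine ⟨s.toList.length, fun j => (a :: s.toList).get j, ?_, ?_⟩
  · intro j
    show (a :: s.toList).get j ∈ X
    have hmem : (a :: s.toList).get j ∈ (a :: s.toList) := List.get_mem (a :: s.toList) j
    rcases List.mem_cons.1 hmem with h | h
    · rw [h]; exact ha
    · exact hs1 (Finset.mem_toList.1 h)
  · refine cl_mono ?_ hs2
    intro y hy
    have hyl : y ∈ (a :: s.toList) := List.mem_cons_of_mem _ (Finset.mem_toList.2 hy)
    obtain ⟨j, hj⟩ := List.mem_iff_get.1 hyl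
    exact ⟨j, hj⟩

/-- Evaluation of terms (W-type over leaves in `X` and operations of `A`). -/
noncomputable def evalW (A : Alg ι M) (X : Set M) :
    WType (fun a : (↥X ⊕ ι) => ULift.{u} (Fin (Sum.elim (fun _ => 0) A.arity a))) → M
  | ⟨Sum.inl x, _⟩ => x.val
  | ⟨Sum.inr i, f⟩ => A.op i fun k => evalW A X (f ⟨k⟩)

theorem evalW_mem (A : Alg ι M) (X : Set M) : ∀ t, A.cl X (evalW A X t) := by
  intro t
  induction t with
  | mk a f ih =>
    cases a with
    | inl x =>
      simp only [evalW]
      exact Alg.cl.base x.2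
    | inr i =>
      simp only [evalW]
      exact Alg.cl.op i _ fun k => ih ⟨k⟩

theorem evalW_surj (A : Alg ι M) (X : Set M) : ∀ m, A.cl X m → ∃ t, evalW A X t = m := by
  intro m hm
  induction hm with
  | base hx =>
    exact ⟨⟨Sum.inl ⟨_, hx⟩, fun e => (Fin.elim0 e.down)⟩, rfl⟩
  | op i v hv ih =>
    choose t ht using ih
    refine ⟨⟨Sum.inr i, fun e => t e.down⟩, ?_⟩
    simp only [evalW]
    congr 1
    funext k
    exact ht k

theorem mk_cl_le {lam : Cardinal.{u}} (A : Alg ι M) (hι : #ι ≤ lam) (hlam : ℵ₀ ≤ lam)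
    (X : Set M) (hX : #X ≤ lam) : #{m | A.cl X m} ≤ lam := by
  classical
  have hsurj : Function.Surjective
      (fun t => (⟨evalW A X t, evalW_mem A X t⟩ : {m | A.cl X m})) := by
    rintro ⟨m, hm⟩
    obtain ⟨t, ht⟩ := evalW_surj A X m hm
    exact ⟨t, Subtype.ext ht⟩
  have h1 := Cardinal.mk_le_of_surjective hsurj
  have h2 : #(WType (fun a : (↥X ⊕ ι) => ULift.{u} (Fin (Sum.elim (fun _ => 0) A.arity a)))) ≤
      max #(↥X ⊕ ι) ℵ₀ := by
    have : ∀ a : (↥X ⊕ ι), Finite (ULift.{u} (Fin (Sum.elim (fun _ => 0) A.arity a))) := by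
      intro a; infer_instance
    exact WType.cardinalMk_le_max_aleph0_of_finite
  refine h1.trans (h2.trans ?_)
  have h3 : #(↥X ⊕ ι) ≤ lam := by
    rw [Cardinal.mk_sum, Cardinal.lift_id, Cardinal.lift_id]
    calc #↥X + #ι ≤ lam + lam := add_le_add hX hι
      _ = lam := Cardinal.add_eq_self hlam
  exact max_le h3 hlam

theorem exists_surj_onto {S : Set M} (hne : S.Nonempty) {N : Type u} (hcard : #S ≤ #N) :
    ∃ e : N → M, (∀ b, e b ∈ S) ∧ ∀ m ∈ S, ∃ b, e b = m := by
  classical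
  obtain ⟨f⟩ := (Cardinal.le_def _ _).1 hcard
  refine ⟨fun b => if h : ∃ s : ↥S, f s = b then (h.choose : ↥S).val else hne.choose, ?_, ?_⟩
  · intro b
    show (if h : ∃ s : ↥S, f s = b then (h.choose : ↥S).val else hne.choose) ∈ S
    by_cases h : ∃ s : ↥S, f s = b
    · rw [dif_pos h]; exact (h.choose).2
    · rw [dif_neg h]; exact hne.choose_spec
  · intro m hm
    refine ⟨f ⟨m, hm⟩, ?_⟩
    show (if h : ∃ s : ↥S, f s = f ⟨m, hm⟩ then (h.choose : ↥S).val else hne.choose) = m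
    have h : ∃ s : ↥S, f s = f ⟨m, hm⟩ := ⟨⟨m, hm⟩, rfl⟩
    rw [dif_pos h]
    have := f.injective h.choose_spec
    rw [this]

section Comb

variable {ι' N : Type u}

def getL (m₀ : M) : M ⊕ N → M := Sum.elim id fun _ => m₀

def getR (b₀ : N) : M ⊕ N → N := Sum.elim (fun _ => b₀) id

def combArity (B : Alg ι' N) : (ι' ⊕ (ULift.{u} ℕ ⊕ ULift.{u} ℕ)) → ℕ
  | Sum.inl t => B.arity t
  | Sum.inr (Sum.inl r) => r.down + 2
  | Sum.inr (Sum.inr r) => r.down + 2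

def combOp (B : Alg ι' N) (E : ∀ r : ℕ, (Fin (r + 1) → M) → N → M)
    (cF : ∀ r : ℕ, (Fin (r + 1) → M) → M → N) (m₀ : M) (b₀ : N) :
    (j : ι' ⊕ (ULift.{u} ℕ ⊕ ULift.{u} ℕ)) → (Fin (combArity B j) → M ⊕ N) → M ⊕ N
  | Sum.inl t => fun v => Sum.inr (B.op t fun k => getR b₀ (v k))
  | Sum.inr (Sum.inl r) => fun v =>
      Sum.inr (cF r.down (fun k => getL m₀ (v (Fin.castSucc k)))
        (getL m₀ (v (Fin.last (r.down + 1)))))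
  | Sum.inr (Sum.inr r) => fun v =>
      Sum.inl (E r.down (fun k => getL m₀ (v (Fin.castSucc k)))
        (getR b₀ (v (Fin.last (r.down + 1)))))

def combAlg (B : Alg ι' N) (E : ∀ r : ℕ, (Fin (r + 1) → M) → N → M)
    (cF : ∀ r : ℕ, (Fin (r + 1) → M) → M → N) (m₀ : M) (b₀ : N) :
    Alg (ι' ⊕ (ULift.{u} ℕ ⊕ ULift.{u} ℕ)) (M ⊕ N) :=
  ⟨combArity B, combOp B E cF m₀ b₀⟩

variable (B : Alg ι' N) (E : ∀ r : ℕ, (Fin (r + 1) → M) → N → M)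
    (cF : ∀ r : ℕ, (Fin (r + 1) → M) → M → N) (m₀ : M) (b₀ : N)

theorem combAlg_op_inl (t : ι') (y : Fin (B.arity t) → N) :
    (combAlg B E cF m₀ b₀).op (Sum.inl t) (fun k => Sum.inr (y k)) = Sum.inr (B.op t y) := rfl

theorem combAlg_op_code (r : ℕ) (z : Fin (r + 1) → M) (w : M ⊕ N) :
    (combAlg B E cF m₀ b₀).op (Sum.inr (Sum.inl ⟨r⟩))
      (Fin.snoc (fun k => Sum.inl (z k)) w) =
      Sum.inr (cF r z (getL m₀ w)) := by
  show Sum.inr (cF r (fun k => getL m₀ (Fin.snoc (α := fun _ : Fin (r + 2) => M ⊕ N)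
    (fun k => Sum.inl (z k)) w (Fin.castSucc k))) (getL m₀ (Fin.snoc (α := fun _ : Fin (r + 2) => M ⊕ N)
    (fun k => Sum.inl (z k)) w (Fin.last (r + 1))))) = _
  simp only [combAlg, combOp, Fin.snoc_castSucc, Fin.snoc_last, getL, Sum.elim_inl, id_eq]

theorem combAlg_op_decode (r : ℕ) (z : Fin (r + 1) → M) (w : M ⊕ N) :
    (combAlg B E cF m₀ b₀).op (Sum.inr (Sum.inr ⟨r⟩))
      (Fin.snoc (fun k => Sum.inl (z k)) w) =
      Sum.inl (E r z (getR b₀ w)) := by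
  show Sum.inl (E r (fun k => getL m₀ (Fin.snoc (α := fun _ : Fin (r + 2) => M ⊕ N)
    (fun k => Sum.inl (z k)) w (Fin.castSucc k))) (getR b₀ (Fin.snoc (α := fun _ : Fin (r + 2) => M ⊕ N)
    (fun k => Sum.inl (z k)) w (Fin.last (r + 1))))) = _
  simp only [combAlg, combOp, Fin.snoc_castSucc, Fin.snoc_last, getL, Sum.elim_inl, id_eq]

theorem cl_inr_lift {Y : Set N} :
    ∀ {w}, B.cl Y w → (combAlg B E cF m₀ b₀).cl (Sum.inr '' Y) (Sum.inr w) := by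
  intro w hw
  induction hw with
  | base h => exact Alg.cl.base ⟨_, h, rfl⟩
  | op t y hy ih =>
    have h := Alg.cl.op (A := combAlg B E cF m₀ b₀) (Sum.inl t) (fun k => Sum.inr (y k)) ih
    rwa [combAlg_op_inl] at h

end Comb

end Stmt10Aux

open Stmt10Aux in
/-- If artin(λ₁) exists (κ₀ is the least cardinal all of whose algebras
with ≤ λ₁ operations are non-Artinian) and λ₁ < λ₂ < κ₀, then artin(λ₂) = κ₀. -/
theorem stmt10 (lam₁ lam₂ κ₀ : Cardinal.{u}) (hlam₁ : ℵ₀ ≤ lam₁)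
    (h12 : lam₁ < lam₂) (h2κ : lam₂ < κ₀)
    (hleast : IsLeast {κ | ArtinAt lam₁ κ} κ₀) :
    IsLeast {κ | ArtinAt lam₂ κ} κ₀ := by
  constructor
  · -- membership : every algebra with ≤ lam₂ operations of size κ₀ is non-Artinian
    intro ι M A hι hM hart
    have hℵ2 : ℵ₀ ≤ lam₂ := hlam₁.trans h12.le
    have hℵκ : ℵ₀ ≤ κ₀ := hℵ2.trans h2κ.le
    -- there is an Artinian algebra B of size lam₂ with ≤ lam₁ operations
    have hB : ¬ ArtinAt lam₁ lam₂ := by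
      intro h
      exact absurd (hleast.2 h) (not_le.mpr h2κ)
    rw [ArtinAt] at hB
    push_neg at hB
    obtain ⟨ι', N, B, hι', hN, hBart⟩ := hB
    haveI hMne : Nonempty M := by
      rw [← Cardinal.mk_ne_zero_iff]
      rw [hM]
      exact ne_of_gt (lt_of_lt_of_le Cardinal.aleph0_pos hℵκ)
    haveI hNne : Nonempty N := by
      rw [← Cardinal.mk_ne_zero_iff]
      rw [hN]
      exact ne_of_gt (lt_of_lt_of_le Cardinal.aleph0_pos hℵ2)
    obtain ⟨m₀⟩ := hMne
    obtain ⟨b₀⟩ := hNne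
    -- choose surjections from N onto the finitely generated closed sets
    have hE : ∀ (r : ℕ) (z : Fin (r + 1) → M), ∃ e : N → M,
        (∀ b, e b ∈ {m | A.cl (Set.range z) m}) ∧
        ∀ m ∈ {m | A.cl (Set.range z) m}, ∃ b, e b = m := by
      intro r z
      refine exists_surj_onto (S := {m | A.cl (Set.range z) m}) ⟨z 0, Alg.cl.base ⟨0, rfl⟩⟩ ?_
      rw [hN]
      refine mk_cl_le A hι hℵ2 _ ?_
      exact ((Set.finite_range z).lt_aleph0).le.trans hℵ2
    choose E hE1 hE2 using hE
    have hcF : ∀ (r : ℕ) (z : Fin (r + 1) → M) (w : M), ∃ b : N,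
        A.cl (Set.range z) w → E r z b = w := by
      intro r z w
      by_cases h : A.cl (Set.range z) w
      · obtain ⟨b, hb⟩ := hE2 r z w h
        exact ⟨b, fun _ => hb⟩
      · exact ⟨b₀, fun hc => absurd hc h⟩
    choose cF hcFs using hcF
    set C : Alg (ι' ⊕ (ULift.{u} ℕ ⊕ ULift.{u} ℕ)) (M ⊕ N) := combAlg B E cF m₀ b₀ with hC
    -- C has few operations and full size, hence is non-Artinian
    have hJ : #(ι' ⊕ (ULift.{u} ℕ ⊕ ULift.{u} ℕ)) ≤ lam₁ := by
      rw [Cardinal.mk_sum, Cardinal.mk_sum, Cardinal.mk_uLift, Cardinal.mk_nat]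
      simp only [Cardinal.lift_id, Cardinal.lift_aleph0]
      rw [Cardinal.aleph0_add_aleph0]
      calc #ι' + ℵ₀ ≤ lam₁ + lam₁ := add_le_add hι' hlam₁
        _ = lam₁ := Cardinal.add_eq_self hlam₁
    have hK : #(M ⊕ N) = κ₀ := by
      rw [Cardinal.mk_sum, Cardinal.lift_id, Cardinal.lift_id, hM, hN]
      exact Cardinal.add_eq_left hℵκ h2κ.le
    have hCna : ¬ C.Artinian := hleast.1 _ _ C hJ hK
    rw [Alg.Artinian, not_not] at hCna
    obtain ⟨S, hS, hSS⟩ := hCna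
    have hanti : Antitone S := antitone_nat_of_succ_le fun n => (hSS n).subset
    have hu : ∀ n, ∃ y, y ∈ S n ∧ y ∉ S (n + 1) := by
      intro n
      obtain ⟨y, h1, h2⟩ := Set.exists_of_ssubset (hSS n)
      exact ⟨y, h1, h2⟩
    choose uu hu1 hu2 using hu
    have hbad : ∀ n, ¬ C.cl {y | ∃ m, n < m ∧ uu m = y} (uu n) := by
      intro n hcl
      apply hu2 n
      refine cl_le_closed (hS (n + 1)).2 ?_ hcl
      rintro y ⟨m, hm, rfl⟩
      exact hanti (by omega : n + 1 ≤ m) (hu1 m)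
    by_cases hinf : {n | ∃ b, uu n = Sum.inr b}.Infinite
    · -- infinitely many terms on the N side : contradict B's Artinianity directly
      obtain ⟨f, hf, hfD⟩ := exists_strictMono_mem hinf
      choose w hw using fun k => hfD k
      have hwbad : ∀ k, ¬ B.cl {y | ∃ j, k < j ∧ w j = y} (w k) := by
        intro k hk
        apply hbad (f k)
        rw [hw k]
        have h1 := cl_inr_lift B E cF m₀ b₀ hk
        refine cl_mono ?_ h1
        rintro _ ⟨y, ⟨j, hj, rfl⟩, rfl⟩
        exact ⟨f j, hf hj, hw j⟩
      exact not_artinian_of_badseq w hwbad hBart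
    · -- eventually everything is on the M side
      rw [Set.not_infinite] at hinf
      obtain ⟨n₁, hn₁⟩ : ∃ n₁, ∀ n, n₁ ≤ n → ∃ m, uu n = Sum.inl m := by
        obtain ⟨b, hb⟩ := hinf.bddAbove
        refine ⟨b + 1, fun n hn => ?_⟩
        cases h : uu n with
        | inl m => exact ⟨m, rfl⟩
        | inr bb =>
          have := hb (⟨bb, h⟩ : n ∈ {n | ∃ b, uu n = Sum.inr b})
          omega
      choose x hx using fun k => hn₁ (n₁ + k) (by omega)
      have hbadx : ∀ K, ¬ C.cl (Sum.inl '' {y | ∃ j, K < j ∧ x j = y}) (Sum.inl (x K)) := by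
        intro K hk
        apply hbad (n₁ + K)
        rw [hx K]
        refine cl_mono ?_ hk
        rintro _ ⟨y, ⟨j, hj, rfl⟩, rfl⟩
        exact ⟨n₁ + j, by omega, hx j⟩
      obtain ⟨k₀, hk₀⟩ := eventually_tail_dep hart x
      have hzd : ∀ k : ℕ, ∃ (r : ℕ) (z : Fin (r + 1) → M),
          (∀ j, z j ∈ {y | ∃ m, k₀ + k < m ∧ x m = y}) ∧ A.cl (Set.range z) (x (k₀ + k)) := by
        intro k
        exact cl_tuple_support (hk₀ (k₀ + k) (by omega)) (x (k₀ + k + 1)) ⟨k₀ + k + 1, by omega, rfl⟩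
      choose rr zz hz1 hz2 using hzd
      set W : ℕ → N := fun k => cF (rr k) (zz k) (x (k₀ + k)) with hWdef
      have hstep2 : ∀ k j, k < j →
          C.cl (Sum.inl '' {y | ∃ m, k₀ + k < m ∧ x m = y}) (Sum.inr (W j)) := by
        intro k j hkj
        have hch : ∀ t : Fin (rr j + 2),
            C.cl (Sum.inl '' {y | ∃ m, k₀ + k < m ∧ x m = y})
              ((Fin.snoc (fun s => Sum.inl (zz j s)) (Sum.inl (x (k₀ + j))) :
                Fin (rr j + 2) → M ⊕ N) t) := by
          intro t
          refine Fin.lastCases ?_ ?_ t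
          · rw [Fin.snoc_last]
            exact Alg.cl.base ⟨x (k₀ + j), ⟨k₀ + j, by omega, rfl⟩, rfl⟩
          · intro s
            rw [Fin.snoc_castSucc]
            obtain ⟨m, hm1, hm2⟩ := hz1 j s
            exact Alg.cl.base ⟨zz j s, ⟨m, by omega, hm2⟩, rfl⟩
        have hop := Alg.cl.op (A := combAlg B E cF m₀ b₀) (Sum.inr (Sum.inl ⟨rr j⟩))
          (Fin.snoc (fun s => Sum.inl (zz j s)) (Sum.inl (x (k₀ + j)))) hch
        rw [combAlg_op_code] at hop
        exact hop
      have hWbad : ∀ k, ¬ B.cl {y | ∃ j, k < j ∧ W j = y} (W k) := by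
        intro k hk
        have h1 := cl_inr_lift B E cF m₀ b₀ hk
        have h2 : C.cl (Sum.inl '' {y | ∃ m, k₀ + k < m ∧ x m = y}) (Sum.inr (W k)) := by
          refine cl_trans ?_ h1
          rintro _ ⟨y, ⟨j, hj, rfl⟩, rfl⟩
          exact hstep2 k j hj
        have hch : ∀ t : Fin (rr k + 2),
            C.cl (Sum.inl '' {y | ∃ m, k₀ + k < m ∧ x m = y})
              ((Fin.snoc (fun s => Sum.inl (zz k s)) (Sum.inr (W k)) :
                Fin (rr k + 2) → M ⊕ N) t) := by
          intro t
          refine Fin.lastCases ?_ ?_ t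
          · rw [Fin.snoc_last]
            exact h2
          · intro s
            rw [Fin.snoc_castSucc]
            obtain ⟨m, hm1, hm2⟩ := hz1 k s
            exact Alg.cl.base ⟨zz k s, ⟨m, by omega, hm2⟩, rfl⟩
        have hop := Alg.cl.op (A := combAlg B E cF m₀ b₀) (Sum.inr (Sum.inr ⟨rr k⟩))
          (Fin.snoc (fun s => Sum.inl (zz k s)) (Sum.inr (W k))) hch
        rw [combAlg_op_decode] at hop
        have hval : E (rr k) (zz k) (getR (M := M) b₀ (Sum.inr (W k))) = x (k₀ + k) := by
          show E (rr k) (zz k) (W k) = x (k₀ + k)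
          exact hcFs (rr k) (zz k) (x (k₀ + k)) (hz2 k)
        rw [hval] at hop
        exact hbadx (k₀ + k) hop
      exact not_artinian_of_badseq W hWbad hBart
  · -- lower bound
    intro κ hκ
    refine hleast.2 ?_
    intro ι M A hι hM
    exact hκ ι M A (hι.trans h12.le) hM
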